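/- Let 2π/3 < θ < π, let r₁, r₂ > 0, and set a := (r₁, 0) and b := r₂·(cos(3θ/2), sin(3θ/2)); note a, b ∈ S_{2θ}. Then every continuous curve γ : [0,1] → ℝ² with image contained in S_{2θ}, γ(0) = a and γ(1) = b satisfies eVariationOn γ [0,1] > ‖a‖ + ‖b‖ (strict inequality in [0,∞], where ‖a‖ + ‖b‖ is viewed as a finite extended real). In particular no curve in the punctured double sector from a to b realizes the length ‖a‖ + ‖b‖. -/

import Mathlib

open Real Set

/-- The closed planar sector of angle `θ` (in Euclidean `ℝ²`) with the apex removed. -/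
def punctSectorE (θ : ℝ) : Set (EuclideanSpace ℝ (Fin 2)) :=
  {p | ∃ r : ℝ, 0 < r ∧ ∃ φ : ℝ, 0 ≤ φ ∧ φ ≤ θ ∧
    p = (WithLp.equiv 2 (Fin 2 → ℝ)).symm ![r * Real.cos φ, r * Real.sin φ]}

lemma sin_3half_neg {θ : ℝ} (hθ₁ : 2 * Real.pi / 3 < θ) (hθ₂ : θ < Real.pi) :
    Real.sin (3 * θ / 2) < 0 := by
  have hπ := Real.pi_pos
  have h2 : 0 < Real.sin (3 * θ / 2 - Real.pi) :=
    Real.sin_pos_of_pos_of_lt_pi (by linarith) (by linarith)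
  have h1 := Real.sin_add_pi (3 * θ / 2 - Real.pi)
  rw [show 3 * θ / 2 - Real.pi + Real.pi = 3 * θ / 2 by ring] at h1
  linarith

lemma key_perp_neg {θ : ℝ} (hθ₁ : 2 * Real.pi / 3 < θ) (hθ₂ : θ < Real.pi)
    {p : EuclideanSpace ℝ (Fin 2)} (hp : p ∈ punctSectorE (2 * θ))
    (h : p 0 * Real.cos (3 * θ / 2) + p 1 * Real.sin (3 * θ / 2) = 0) : p 0 < 0 := by
  have hπ := Real.pi_pos
  obtain ⟨r, hr, φ, hφ0, hφθ, rfl⟩ := hp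
  have h0 : ((WithLp.equiv 2 (Fin 2 → ℝ)).symm ![r * Real.cos φ, r * Real.sin φ]) 0
      = r * Real.cos φ := rfl
  have h1 : ((WithLp.equiv 2 (Fin 2 → ℝ)).symm ![r * Real.cos φ, r * Real.sin φ]) 1
      = r * Real.sin φ := rfl
  rw [h0, h1] at h
  rw [h0]
  have hc : Real.cos (φ - 3 * θ / 2) = 0 := by
    rw [Real.cos_sub]
    have h' : r * (Real.cos φ * Real.cos (3 * θ / 2) + Real.sin φ * Real.sin (3 * θ / 2))
        = r * 0 := by linear_combination h
    exact mul_left_cancel₀ hr.ne' h'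
  obtain ⟨k, hk⟩ := Real.cos_eq_zero_iff.1 hc
  have hlo : -(3 * Real.pi / 2) < φ - 3 * θ / 2 := by linarith
  have hhi : φ - 3 * θ / 2 < Real.pi / 2 := by linarith
  rw [hk] at hlo hhi
  have hk1 : (-2 : ℝ) < (k : ℝ) := by nlinarith
  have hk2 : (k : ℝ) < 0 := by nlinarith
  have hk3 : k = -1 := by
    have a1 : (-2 : ℤ) < k := by exact_mod_cast hk1
    have a2 : k < 0 := by exact_mod_cast hk2
    omega
  have hφ : φ = 3 * θ / 2 - Real.pi / 2 := by
    rw [hk3] at hk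
    push_cast at hk
    linarith
  have hcosφ : Real.cos φ = Real.sin (3 * θ / 2) := by
    rw [hφ, show 3 * θ / 2 - Real.pi / 2 = -(Real.pi / 2 - 3 * θ / 2) by ring,
      Real.cos_neg, Real.cos_pi_div_two_sub]
  rw [hcosφ]
  exact mul_neg_of_pos_of_neg hr (sin_3half_neg hθ₁ hθ₂)

lemma coord_le_norm (v : EuclideanSpace ℝ (Fin 2)) : v 0 ≤ ‖v‖ := by
  rw [EuclideanSpace.norm_eq]
  simp only [Fin.sum_univ_two, Real.norm_eq_abs, sq_abs]
  have h1 : v 0 ≤ |v 0| := le_abs_self _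
  have h2 : |v 0| = Real.sqrt ((v 0) ^ 2) := (Real.sqrt_sq_eq_abs _).symm
  have h3 : Real.sqrt ((v 0) ^ 2) ≤ Real.sqrt ((v 0) ^ 2 + (v 1) ^ 2) :=
    Real.sqrt_le_sqrt (by nlinarith [sq_nonneg (v 1)])
  linarith

lemma proj_le_norm (v : EuclideanSpace ℝ (Fin 2)) (c s : ℝ) (hcs : c ^ 2 + s ^ 2 = 1) :
    v 0 * c + v 1 * s ≤ ‖v‖ := by
  rw [EuclideanSpace.norm_eq]
  simp only [Fin.sum_univ_two, Real.norm_eq_abs, sq_abs]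
  have hn : 0 ≤ Real.sqrt ((v 0) ^ 2 + (v 1) ^ 2) := Real.sqrt_nonneg _
  have hsq : (Real.sqrt ((v 0) ^ 2 + (v 1) ^ 2)) ^ 2 = (v 0) ^ 2 + (v 1) ^ 2 :=
    Real.sq_sqrt (by positivity)
  nlinarith [sq_nonneg (v 0 * s - v 1 * c),
    sq_nonneg (Real.sqrt ((v 0) ^ 2 + (v 1) ^ 2) - (v 0 * c + v 1 * s)),
    sq_nonneg (Real.sqrt ((v 0) ^ 2 + (v 1) ^ 2) + (v 0 * c + v 1 * s))]


/-- **No minimizer through the missing apex.** For `2π/3 < θ < π`, `a = (r₁, 0)` and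
`b = r₂·(cos (3θ/2), sin (3θ/2))` in the punctured double sector `S_{2θ}`, every continuous
curve from `a` to `b` inside `S_{2θ}` has length strictly larger than `‖a‖ + ‖b‖`. -/
theorem length_gt_in_punctured_double_sector {θ r₁ r₂ : ℝ}
    (hθ₁ : 2 * Real.pi / 3 < θ) (hθ₂ : θ < Real.pi) (hr₁ : 0 < r₁) (hr₂ : 0 < r₂)
    (a b : EuclideanSpace ℝ (Fin 2))
    (ha : a = (WithLp.equiv 2 (Fin 2 → ℝ)).symm ![r₁, 0])
    (hb : b = (WithLp.equiv 2 (Fin 2 → ℝ)).symm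
      ![r₂ * Real.cos (3 * θ / 2), r₂ * Real.sin (3 * θ / 2)])
    (γ : ℝ → EuclideanSpace ℝ (Fin 2)) (hγc : ContinuousOn γ (Set.Icc 0 1))
    (hγS : γ '' Set.Icc 0 1 ⊆ punctSectorE (2 * θ)) (h0 : γ 0 = a) (h1 : γ 1 = b) :
    ENNReal.ofReal (‖a‖ + ‖b‖) < eVariationOn γ (Set.Icc 0 1) := by
  have hπ := Real.pi_pos
  have hcos : Real.cos (3 * θ / 2) < 0 :=
    Real.cos_neg_of_pi_div_two_lt_of_lt (by linarith) (by linarith)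
  have hsin : Real.sin (3 * θ / 2) < 0 := sin_3half_neg hθ₁ hθ₂
  have hpyth := Real.sin_sq_add_cos_sq (3 * θ / 2)
  -- coordinates of a and b
  have ha0 : a 0 = r₁ := by rw [ha]; rfl
  have ha1 : a 1 = 0 := by rw [ha]; rfl
  have hb0 : b 0 = r₂ * Real.cos (3 * θ / 2) := by rw [hb]; rfl
  have hb1 : b 1 = r₂ * Real.sin (3 * θ / 2) := by rw [hb]; rfl
  -- norms
  have hna : ‖a‖ = r₁ := by
    rw [ha]; simp [EuclideanSpace.norm_eq, Fin.sum_univ_two, Real.sqrt_sq hr₁.le]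
  have hnb : ‖b‖ = r₂ := by
    rw [hb]
    have hsum : (r₂ * Real.cos (3 * θ / 2)) ^ 2 + (r₂ * Real.sin (3 * θ / 2)) ^ 2 = r₂ ^ 2 := by
      nlinarith
    simp only [EuclideanSpace.norm_eq, Fin.sum_univ_two, Real.norm_eq_abs, sq_abs]
    rw [show ((WithLp.equiv 2 (Fin 2 → ℝ)).symm
        ![r₂ * Real.cos (3 * θ / 2), r₂ * Real.sin (3 * θ / 2)]) 0
        = r₂ * Real.cos (3 * θ / 2) from rfl,
      show ((WithLp.equiv 2 (Fin 2 → ℝ)).symm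
        ![r₂ * Real.cos (3 * θ / 2), r₂ * Real.sin (3 * θ / 2)]) 1
        = r₂ * Real.sin (3 * θ / 2) from rfl, hsum, Real.sqrt_sq hr₂.le]
  -- find t₂ where γ is perpendicular to b's direction
  obtain ⟨t₂, ht₂mem, ht₂⟩ :
      ∃ t ∈ Icc (0 : ℝ) 1, γ t 0 * Real.cos (3 * θ / 2) + γ t 1 * Real.sin (3 * θ / 2) = 0 := by
    have hfc : ContinuousOn
        (fun t => γ t 0 * Real.cos (3 * θ / 2) + γ t 1 * Real.sin (3 * θ / 2)) (Icc 0 1) :=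
      (((continuous_apply 0).comp_continuousOn ((PiLp.continuous_ofLp 2 _).comp_continuousOn hγc)).mul continuousOn_const).add
        (((continuous_apply 1).comp_continuousOn ((PiLp.continuous_ofLp 2 _).comp_continuousOn hγc)).mul continuousOn_const)
    have hf0 : γ 0 0 * Real.cos (3 * θ / 2) + γ 0 1 * Real.sin (3 * θ / 2) ≤ 0 := by
      rw [h0, ha0, ha1]; nlinarith
    have hf1 : 0 ≤ γ 1 0 * Real.cos (3 * θ / 2) + γ 1 1 * Real.sin (3 * θ / 2) := by
      rw [h1, hb0, hb1]; nlinarith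
    exact intermediate_value_Icc (by norm_num) hfc ⟨hf0, hf1⟩
  have hx₂ : γ t₂ 0 < 0 :=
    key_perp_neg hθ₁ hθ₂ (hγS (mem_image_of_mem γ ht₂mem)) ht₂
  -- find t₁ ≤ t₂ where the x-coordinate vanishes
  obtain ⟨t₁, ht₁mem, ht₁⟩ : ∃ t ∈ Icc (0 : ℝ) t₂, γ t 0 = 0 := by
    have hgc : ContinuousOn (fun t => γ t 0) (Icc 0 t₂) :=
      (continuous_apply 0).comp_continuousOn ((PiLp.continuous_ofLp 2 _).comp_continuousOn (hγc.mono (Icc_subset_Icc le_rfl ht₂mem.2)))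
    have hg0 : γ 0 0 = r₁ := by rw [h0, ha0]
    exact intermediate_value_Icc' ht₂mem.1 hgc ⟨hx₂.le, by rw [hg0]; exact hr₁.le⟩
  -- split the variation
  have e1 := eVariationOn.Icc_add_Icc γ (s := (univ : Set ℝ)) ht₁mem.1 ht₁mem.2 (mem_univ t₁)
  have e2 := eVariationOn.Icc_add_Icc γ (s := (univ : Set ℝ)) ht₂mem.1 ht₂mem.2 (mem_univ t₂)
  simp only [univ_inter] at e1 e2
  -- three lower bounds
  have d1 : ENNReal.ofReal r₁ ≤ edist (γ 0) (γ t₁) := by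
    rw [edist_dist]
    apply ENNReal.ofReal_le_ofReal
    rw [dist_eq_norm]
    have hv0 : (γ 0 - γ t₁) 0 = r₁ := by
      show γ 0 0 - γ t₁ 0 = r₁
      rw [ht₁, h0, ha0]; ring
    have := coord_le_norm (γ 0 - γ t₁)
    rw [hv0] at this; exact this
  have d3 : ENNReal.ofReal r₂ ≤ edist (γ t₂) (γ 1) := by
    rw [edist_dist]
    apply ENNReal.ofReal_le_ofReal
    rw [dist_comm, dist_eq_norm]
    have hv0 : (γ 1 - γ t₂) 0 = γ 1 0 - γ t₂ 0 := rfl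
    have hv1 : (γ 1 - γ t₂) 1 = γ 1 1 - γ t₂ 1 := rfl
    have hproj := proj_le_norm (γ 1 - γ t₂) (Real.cos (3 * θ / 2)) (Real.sin (3 * θ / 2))
      (by linarith)
    have hg10 : γ 1 0 = r₂ * Real.cos (3 * θ / 2) := by rw [h1]; exact hb0
    have hg11 : γ 1 1 = r₂ * Real.sin (3 * θ / 2) := by rw [h1]; exact hb1
    rw [hv0, hv1, hg10, hg11] at hproj
    have expand : (r₂ * Real.cos (3 * θ / 2) - γ t₂ 0) * Real.cos (3 * θ / 2)
        + (r₂ * Real.sin (3 * θ / 2) - γ t₂ 1) * Real.sin (3 * θ / 2)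
        = r₂ * (Real.sin (3 * θ / 2) ^ 2 + Real.cos (3 * θ / 2) ^ 2)
          - (γ t₂ 0 * Real.cos (3 * θ / 2) + γ t₂ 1 * Real.sin (3 * θ / 2)) := by ring
    rw [expand, hpyth, ht₂] at hproj
    linarith
  have hmid : (0 : ENNReal) < edist (γ t₁) (γ t₂) := by
    rw [edist_pos]
    intro hEq
    have hxx : γ t₁ 0 = γ t₂ 0 := by rw [hEq]
    rw [ht₁] at hxx
    linarith
  -- variation bounds
  have k1 : edist (γ 0) (γ t₁) ≤ eVariationOn γ (Icc 0 t₁) :=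
    eVariationOn.edist_le γ (left_mem_Icc.2 ht₁mem.1) (right_mem_Icc.2 ht₁mem.1)
  have k2 : edist (γ t₁) (γ t₂) ≤ eVariationOn γ (Icc t₁ t₂) :=
    eVariationOn.edist_le γ (left_mem_Icc.2 ht₁mem.2) (right_mem_Icc.2 ht₁mem.2)
  have k3 : edist (γ t₂) (γ 1) ≤ eVariationOn γ (Icc t₂ 1) :=
    eVariationOn.edist_le γ (left_mem_Icc.2 ht₂mem.2) (right_mem_Icc.2 ht₂mem.2)
  calc ENNReal.ofReal (‖a‖ + ‖b‖) = ENNReal.ofReal r₁ + ENNReal.ofReal r₂ := by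
        rw [hna, hnb, ENNReal.ofReal_add hr₁.le hr₂.le]
    _ < ENNReal.ofReal r₁ + edist (γ t₁) (γ t₂) + ENNReal.ofReal r₂ := by
        have h1' : ENNReal.ofReal r₁ < ENNReal.ofReal r₁ + edist (γ t₁) (γ t₂) :=
          ENNReal.lt_add_right ENNReal.ofReal_ne_top hmid.ne'
        exact ENNReal.add_lt_add_right ENNReal.ofReal_ne_top h1'
    _ ≤ eVariationOn γ (Icc 0 t₁) + eVariationOn γ (Icc t₁ t₂) + eVariationOn γ (Icc t₂ 1) :=
        add_le_add (add_le_add (d1.trans k1) k2) (d3.trans k3)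
    _ = eVariationOn γ (Icc 0 1) := by rw [e1, e2]
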